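/- Let f, h ≥ 1 with h odd, 1 ≤ a ≤ f with gcd(a,f) = 1, and let Δ be the discriminant of a quadratic number field with b = Δ/gcd(f,Δ) odd. Then ∑_{n ≥ 1, Δ | lcm(n,f), a ≡ 1 mod gcd(f,n)} μ(n)/w(n) = μ(|b|)·A(a,f,h) / ∏_{p | b} (w(p) − 1), where A(a,f,h) = ∏_{p | gcd(a−1,f)} (1 − 1/w(p)) · ∏_{p ∤ f} (1 − 1/w(p)). -/

import Mathlib

open ArithmeticFunction

private lemma SEOB.coprime_of_no_common_prime {m n : ℕ}
    (h : ∀ p : ℕ, p.Prime → p ∣ m → p ∣ n → False) : Nat.Coprime m n := by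
  rw [Nat.coprime_iff_gcd_eq_one]
  by_contra hne
  obtain ⟨p, pp, pd⟩ := Nat.exists_prime_and_dvd hne
  exact h p pp (pd.trans (Nat.gcd_dvd_left _ _)) (pd.trans (Nat.gcd_dvd_right _ _))

private lemma SEOB.gcd_mul {m n k : ℕ} (hmn : Nat.Coprime m n) :
    Nat.gcd (m * n) k = Nat.gcd m k * Nat.gcd n k := by
  refine Nat.dvd_antisymm ?_ ?_
  · have h1 : Nat.gcd (m * n) k ∣ Nat.gcd (Nat.gcd (m*n) k) m * Nat.gcd (Nat.gcd (m*n) k) n :=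
      Nat.dvd_gcd_mul_gcd_iff_dvd_mul.mpr (Nat.gcd_dvd_left _ _)
    exact h1.trans (mul_dvd_mul
      (Nat.dvd_gcd ((Nat.gcd_dvd_right _ _)) ((Nat.gcd_dvd_left _ _).trans (Nat.gcd_dvd_right _ _)))
      (Nat.dvd_gcd ((Nat.gcd_dvd_right _ _)) ((Nat.gcd_dvd_left _ _).trans (Nat.gcd_dvd_right _ _))))
  · refine Nat.dvd_gcd (mul_dvd_mul (Nat.gcd_dvd_left _ _) (Nat.gcd_dvd_left _ _)) ?_
    have hco : Nat.Coprime (Nat.gcd m k) (Nat.gcd n k) :=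
      Nat.Coprime.coprime_dvd_left (Nat.gcd_dvd_left _ _)
        (Nat.Coprime.coprime_dvd_right (Nat.gcd_dvd_left _ _) hmn)
    exact hco.mul_dvd_of_dvd_of_dvd (Nat.gcd_dvd_right _ _) (Nat.gcd_dvd_right _ _)

section W
variable (f h : ℕ) (hf : 1 ≤ f) (hh : 1 ≤ h) (w : ℕ → ℕ)
  (hw : ∀ k, w k = k * Nat.totient (Nat.lcm k f) / (Nat.gcd k h * Nat.totient f))

include hf hh hw

private lemma SEOB.wExact (k : ℕ) :
    w k * (Nat.gcd k h * Nat.totient f) = k * Nat.totient (Nat.lcm k f) := by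
  rw [hw k]
  exact Nat.div_mul_cancel (mul_dvd_mul (Nat.gcd_dvd_left _ _)
      (Nat.totient_dvd_of_dvd (Nat.dvd_lcm_right _ _)))

private lemma SEOB.w1 : w 1 = 1 := by
  have h1 := SEOB.wExact f h hf hh w hw 1
  simp only [Nat.lcm_one_left, Nat.gcd_one_left, one_mul] at h1
  exact Nat.eq_of_mul_eq_mul_right (Nat.totient_pos.mpr hf) (by simpa using h1)

omit hf hh hw in
private lemma SEOB.coprime_div_gcd {k : ℕ} (hk : Squarefree k) :
    Nat.Coprime (k / Nat.gcd k f) f := by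
  refine SEOB.coprime_of_no_common_prime (fun p pp h1 h2 => ?_)
  have hkd : p ∣ k := h1.trans (Nat.div_dvd_of_dvd (Nat.gcd_dvd_left _ _))
  have hsq : p * p ∣ k := by
    calc p * p ∣ (k / Nat.gcd k f) * Nat.gcd k f := mul_dvd_mul h1 (Nat.dvd_gcd hkd h2)
    _ = k := Nat.div_mul_cancel (Nat.gcd_dvd_left _ _)
  exact pp.one_lt.ne' (Nat.isUnit_iff.mp (hk p hsq))

omit hf hh hw in
private lemma SEOB.lcm_eq (k : ℕ) : Nat.lcm k f = (k / Nat.gcd k f) * f := by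
  rw [Nat.lcm, mul_comm k f, Nat.mul_div_assoc f (Nat.gcd_dvd_left k f), mul_comm]

private lemma SEOB.wsq {k : ℕ} (hk : Squarefree k) :
    w k * Nat.gcd k h = k * Nat.totient (k / Nat.gcd k f) := by
  have h1 := SEOB.wExact f h hf hh w hw k
  rw [SEOB.lcm_eq f k, Nat.totient_mul (SEOB.coprime_div_gcd f hk)] at h1
  have h2 : w k * Nat.gcd k h * Nat.totient f
      = k * Nat.totient (k / Nat.gcd k f) * Nat.totient f := by
    rw [mul_assoc, h1]; ring
  exact Nat.eq_of_mul_eq_mul_right (Nat.totient_pos.mpr hf) h2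

private lemma SEOB.wmul {m n : ℕ} (hm : Squarefree m) (hn : Squarefree n)
    (hmn : Nat.Coprime m n) : w (m * n) = w m * w n := by
  have hmn' : Squarefree (m * n) := (Nat.squarefree_mul hmn).mpr ⟨hm, hn⟩
  have h1 := SEOB.wsq f h hf hh w hw hmn'
  have h2 := SEOB.wsq f h hf hh w hw hm
  have h3 := SEOB.wsq f h hf hh w hw hn
  have hgh : Nat.gcd (m * n) h = Nat.gcd m h * Nat.gcd n h := SEOB.gcd_mul hmn
  have hgf : Nat.gcd (m * n) f = Nat.gcd m f * Nat.gcd n f := SEOB.gcd_mul hmn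
  have hdiv : (m * n) / Nat.gcd (m * n) f = (m / Nat.gcd m f) * (n / Nat.gcd n f) := by
    rw [hgf]; exact (Nat.div_mul_div_comm (Nat.gcd_dvd_left _ _) (Nat.gcd_dvd_left _ _)).symm
  have hcop : Nat.Coprime (m / Nat.gcd m f) (n / Nat.gcd n f) :=
    Nat.Coprime.coprime_dvd_left (Nat.div_dvd_of_dvd (Nat.gcd_dvd_left _ _))
      (Nat.Coprime.coprime_dvd_right (Nat.div_dvd_of_dvd (Nat.gcd_dvd_left _ _)) hmn)
  rw [hgh, hdiv, Nat.totient_mul hcop] at h1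
  have key : w (m * n) * (Nat.gcd m h * Nat.gcd n h)
      = (w m * w n) * (Nat.gcd m h * Nat.gcd n h) := by
    rw [h1]
    calc m * n * ((m / Nat.gcd m f).totient * (n / Nat.gcd n f).totient)
        = (m * (m / Nat.gcd m f).totient) * (n * (n / Nat.gcd n f).totient) := by ring
      _ = (w m * Nat.gcd m h) * (w n * Nat.gcd n h) := by rw [h2, h3]
      _ = (w m * w n) * (Nat.gcd m h * Nat.gcd n h) := by ring
  have hpos : 0 < Nat.gcd m h * Nat.gcd n h :=
    Nat.mul_pos (Nat.gcd_pos_of_pos_right _ hh) (Nat.gcd_pos_of_pos_right _ hh)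
  exact Nat.eq_of_mul_eq_mul_right hpos key

private lemma SEOB.wprime_notf {p : ℕ} (pp : p.Prime) (hpf : ¬ p ∣ f) :
    w p * Nat.gcd p h = p * (p - 1) := by
  have h1 := SEOB.wsq f h hf hh w hw pp.prime.squarefree
  rwa [Nat.Coprime.gcd_eq_one ((Nat.Prime.coprime_iff_not_dvd pp).mpr hpf), Nat.div_one,
    Nat.totient_prime pp] at h1

private lemma SEOB.wpos {k : ℕ} (hk : Squarefree k) : 0 < w k := by
  have h1 := SEOB.wsq f h hf hh w hw hk
  have hk0 : 0 < k := Nat.pos_of_ne_zero (by rintro rfl; exact not_squarefree_zero hk)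
  have : 0 < k * Nat.totient (k / Nat.gcd k f) :=
    Nat.mul_pos hk0 (Nat.totient_pos.mpr (Nat.div_pos (Nat.le_of_dvd hk0 (Nat.gcd_dvd_left _ _))
      (Nat.gcd_pos_of_pos_left _ hk0)))
  by_contra hw0
  push_neg at hw0
  interval_cases hwk : w k
  omega

end W

section W2
variable (f h : ℕ) (hf : 1 ≤ f) (hh : 1 ≤ h) (w : ℕ → ℕ)
  (hw : ∀ k, w k = k * Nat.totient (Nat.lcm k f) / (Nat.gcd k h * Nat.totient f))

include hf hh hw in
private lemma SEOB.wp2 {p : ℕ} (pp : p.Prime) (hpf : ¬ p ∣ f) (hpo : Odd p) : 2 ≤ w p := by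
  have h1 := SEOB.wprime_notf f h hf hh w hw pp hpf
  have h2 : Nat.gcd p h ≤ p := Nat.le_of_dvd pp.pos (Nat.gcd_dvd_left _ _)
  have h3 : p * (p - 1) ≤ w p * p :=
    h1 ▸ Nat.mul_le_mul_left (w p) h2
  have h4 : p - 1 ≤ w p := by
    have h5 : (p - 1) * p ≤ w p * p := by rw [mul_comm (p-1) p]; exact h3
    exact Nat.le_of_mul_le_mul_right h5 pp.pos
  have hp3 : 3 ≤ p := by
    have := pp.two_le
    rcases Nat.lt_or_ge p 3 with hlt | hge
    · interval_cases p
      · exact absurd hpo (by decide)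
    · exact hge
  omega

include hf hh hw in
private lemma SEOB.wlow {k : ℕ} (hk : Squarefree k) :
    k * Nat.totient k ≤ w k * (h * f) := by
  have h1 := SEOB.wsq f h hf hh w hw hk
  have hk0 : 0 < k := Nat.pos_of_ne_zero (fun h0 => not_squarefree_zero (h0 ▸ hk))
  set gkf := Nat.gcd k f with hgkf
  have hcop2 : Nat.Coprime (k / gkf) gkf :=
    Nat.Coprime.coprime_dvd_right (Nat.gcd_dvd_right k f) (SEOB.coprime_div_gcd f hk)
  have htot : Nat.totient k = Nat.totient (k / gkf) * Nat.totient gkf := by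
    conv_lhs => rw [← Nat.div_mul_cancel (Nat.gcd_dvd_left k f)]
    exact Nat.totient_mul hcop2
  calc k * Nat.totient k = (k * Nat.totient (k / gkf)) * Nat.totient gkf := by
        rw [htot]; ring
    _ = w k * (Nat.gcd k h * Nat.totient gkf) := by rw [← h1]; ring
    _ ≤ w k * (h * f) := by
        refine Nat.mul_le_mul_left _ (Nat.mul_le_mul ?_ ?_)
        · exact Nat.le_of_dvd hh (Nat.gcd_dvd_right _ _)
        · exact (Nat.totient_le _).trans (Nat.le_of_dvd hf (Nat.gcd_dvd_right _ _))
end W2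
private lemma SEOB.minFac_split {n : ℕ} (hn : Squarefree n) (h2 : n ≠ 1) :
    n.minFac.Prime ∧ Squarefree (n / n.minFac) ∧ Nat.Coprime n.minFac (n / n.minFac)
      ∧ n.minFac * (n / n.minFac) = n ∧ n / n.minFac < n := by
  have hn0 : n ≠ 0 := fun h => not_squarefree_zero (h ▸ hn)
  have pp := Nat.minFac_prime h2
  have hdvd := Nat.minFac_dvd n
  have hmul : n.minFac * (n / n.minFac) = n := Nat.mul_div_cancel' hdvd
  have hsqm : Squarefree (n / n.minFac) := hn.squarefree_of_dvd (Nat.div_dvd_of_dvd hdvd)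
  have hcop : Nat.Coprime n.minFac (n / n.minFac) := by
    rw [Nat.Prime.coprime_iff_not_dvd pp]
    intro hd
    have h4 : n.minFac * n.minFac ∣ n := by
      calc n.minFac * n.minFac ∣ n.minFac * (n / n.minFac) := mul_dvd_mul_left _ hd
        _ = n := hmul
    exact pp.one_lt.ne' (Nat.isUnit_iff.mp (hn _ h4))
  exact ⟨pp, hsqm, hcop, hmul, Nat.div_lt_self (Nat.pos_of_ne_zero hn0) pp.one_lt⟩

private lemma SEOB.totient_sq_odd : ∀ n : ℕ, Squarefree n → Odd n → n ≤ n.totient ^ 2 := by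
  intro n
  induction n using Nat.strong_induction_on with
  | _ n ih =>
    intro hn hodd
    rcases eq_or_ne n 1 with rfl | h1
    · simp
    obtain ⟨pp, hsqm, hcop, hmul, hlt⟩ := SEOB.minFac_split hn h1
    set p := n.minFac
    set m := n / p
    have hmodd : Odd m := by
      rcases Nat.even_or_odd m with he | ho
      · exact absurd (hmul ▸ (he.mul_left p)) (Nat.not_even_iff_odd.mpr hodd)
      · exact ho
    have hpodd : Odd p := by
      rcases Nat.even_or_odd p with he | ho
      · exact absurd (hmul ▸ (he.mul_right m)) (Nat.not_even_iff_odd.mpr hodd)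
      · exact ho
    have hp3 : 3 ≤ p := by
      have := pp.two_le
      rcases Nat.lt_or_ge p 3 with h | h
      · interval_cases p
        · exact absurd hpodd (by decide)
      · exact h
    have ihm := ih m hlt hsqm hmodd
    have htot : n.totient = (p - 1) * m.totient := by
      rw [← hmul, Nat.totient_mul hcop, Nat.totient_prime pp]
    rw [htot, ← hmul]
    have key : p ≤ (p - 1) ^ 2 := by
      have h2 : 2 ≤ p - 1 := by omega
      have h3 : p - 1 + 1 = p := by omega
      nlinarith
    calc p * m ≤ (p - 1) ^ 2 * m.totient ^ 2 := by
          exact Nat.mul_le_mul key ihm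
      _ = ((p - 1) * m.totient) ^ 2 := by ring

private lemma SEOB.totient_sq (n : ℕ) (hn : Squarefree n) : n ≤ 2 * n.totient ^ 2 := by
  rcases Nat.even_or_odd n with he | ho
  · have hn0 : n ≠ 0 := fun h => not_squarefree_zero (h ▸ hn)
    obtain ⟨m, hm⟩ := (even_iff_two_dvd.mp he)
    subst hm
    have hsqm : Squarefree m := hn.squarefree_of_dvd ⟨2, mul_comm 2 m⟩
    have hmodd : Odd m := by
      rcases Nat.even_or_odd m with he2 | ho2
      · obtain ⟨k, hk⟩ := he2
        have h4 : 2 * 2 ∣ 2 * m := ⟨k, by omega⟩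
        exact absurd (Nat.isUnit_iff.mp (hn 2 h4)) (by norm_num)
      · exact ho2
    have hcop : Nat.Coprime 2 m := Nat.prime_two.coprime_iff_not_dvd.mpr
      (fun hd => (Nat.not_even_iff_odd.mpr hmodd) (even_iff_two_dvd.mpr hd))
    have ihm := SEOB.totient_sq_odd m hsqm hmodd
    have htot : (2 * m).totient = m.totient := by
      rw [Nat.totient_mul hcop, Nat.totient_two, one_mul]
    rw [htot]
    exact Nat.mul_le_mul_left 2 ihm
  · exact (SEOB.totient_sq_odd n hn ho).trans (by omega)


section WP
variable (w : ℕ → ℕ) (hw1 : w 1 = 1)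
  (hwmul : ∀ {m n : ℕ}, Squarefree m → Squarefree n → Nat.Coprime m n → w (m * n) = w m * w n)

include hw1 hwmul in
private lemma SEOB.wprod : ∀ n : ℕ, Squarefree n → w n = ∏ p ∈ n.primeFactors, w p := by
  intro n
  induction n using Nat.strong_induction_on with
  | _ n ih =>
    intro hn
    rcases eq_or_ne n 1 with rfl | h1
    · simpa using hw1
    obtain ⟨pp, hsqm, hcop, hmul, hlt⟩ := SEOB.minFac_split hn h1
    set p := n.minFac
    set m := n / p
    have hm0 : m ≠ 0 := fun h => not_squarefree_zero (h ▸ hsqm)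
    have hpf : n.primeFactors = insert p m.primeFactors := by
      rw [← hmul, Nat.primeFactors_mul pp.ne_zero hm0, Nat.Prime.primeFactors pp]
      rfl
    have hpnot : p ∉ m.primeFactors := fun hmem =>
      (Nat.Prime.coprime_iff_not_dvd pp).mp hcop (Nat.dvd_of_mem_primeFactors hmem)
    rw [hpf, Finset.prod_insert hpnot, ← ih m hlt hsqm, ← hwmul pp.prime.squarefree hsqm hcop,
      hmul]
end WP


section B
variable (f : ℕ) (hf : 1 ≤ f)
  (d : ℤ) (hd : Squarefree d) (hd0 : d ≠ 0)
  (Δ : ℤ) (hΔ : Δ = if d % 4 = 1 then d else 4 * d)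
  (b : ℤ) (hb : b = Δ / (Int.gcd (f : ℤ) Δ : ℤ)) (hbodd : Odd b)

include hΔ hd0 in
private lemma SEOB.D0 : Δ ≠ 0 := by
  rcases hΔ.symm ▸ ite_eq_or_eq (d % 4 = 1) d (4 * d) with h | h <;> simp [hΔ] <;> omega

include hΔ hd0 hb in
private lemma SEOB.bG : b * (Int.gcd (f : ℤ) Δ : ℤ) = Δ := by
  rw [hb]; exact Int.ediv_mul_cancel (Int.gcd_dvd_right _ _)

include hΔ hd0 hb in
private lemma SEOB.b0 : b ≠ 0 := by
  intro h0
  have := SEOB.bG f d hd0 Δ hΔ b hb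
  rw [h0, zero_mul] at this
  exact SEOB.D0 d hd0 Δ hΔ this.symm

include hΔ hd in
private lemma SEOB.odd_sq_not_dvd {p : ℕ} (pp : p.Prime) (hp2 : p ≠ 2) :
    ¬ ((p : ℤ) * p ∣ Δ) := by
  intro hdvd
  subst hΔ
  have hpd : (p : ℤ) * p ∣ d := by
    split_ifs at hdvd with hcase
    · exact hdvd
    · have h1 : IsCoprime (p : ℤ) 2 := by
        rw [Int.isCoprime_iff_gcd_eq_one]
        have h2 : Nat.Coprime p 2 := (Nat.coprime_primes pp Nat.prime_two).mpr hp2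
        simpa [Int.gcd] using h2
      have h2 : IsCoprime ((p : ℤ) * p) 2 := h1.mul_left h1
      have h3 : IsCoprime ((p : ℤ) * p) 4 := by
        have : (4 : ℤ) = 2 * 2 := by norm_num
        rw [this]
        exact h2.mul_right h2
      exact h3.dvd_of_dvd_mul_left hdvd
  have hu := hd _ hpd
  rw [Int.isUnit_iff] at hu
  have hlt := pp.one_lt
  rcases hu with hu | hu
  · have : p = 1 := by exact_mod_cast hu
    omega
  · have : (0 : ℤ) ≤ (p : ℤ) := Int.natCast_nonneg p
    omega
end B

section B2
variable (f : ℕ) (hf : 1 ≤ f)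
  (d : ℤ) (hd : Squarefree d) (hd0 : d ≠ 0)
  (Δ : ℤ) (hΔ : Δ = if d % 4 = 1 then d else 4 * d)
  (b : ℤ) (hb : b = Δ / (Int.gcd (f : ℤ) Δ : ℤ)) (hbodd : Odd b)

include hbodd in
private lemma SEOB.Bodd : Odd b.natAbs := Int.natAbs_odd.mpr hbodd

include hΔ hd0 hb in
private lemma SEOB.bdvdD : b ∣ Δ := ⟨_, (SEOB.bG f d hd0 Δ hΔ b hb).symm⟩

include hΔ hd hd0 hb hbodd in
private lemma SEOB.Bsq : Squarefree b.natAbs := by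
  rw [Nat.squarefree_iff_prime_squarefree]
  intro p pp hdvd
  have hp2 : p ≠ 2 := by
    rintro rfl
    have h2 : 2 ∣ b.natAbs := dvd_trans (dvd_mul_right 2 2) hdvd
    exact (Nat.not_even_iff_odd.mpr (SEOB.Bodd b hbodd)) (even_iff_two_dvd.mpr h2)
  have hzd : (p : ℤ) * p ∣ b := by
    have h1 : ((p * p : ℕ) : ℤ) ∣ b := Int.natCast_dvd.mpr hdvd
    push_cast at h1
    exact h1
  exact SEOB.odd_sq_not_dvd d hd Δ hΔ pp hp2
    (hzd.trans (SEOB.bdvdD f d hd0 Δ hΔ b hb))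

include hΔ hd hd0 hb hbodd in
private lemma SEOB.Bcopf : Nat.Coprime b.natAbs f := by
  refine SEOB.coprime_of_no_common_prime (fun p pp hpB hpf => ?_)
  have hp2 : p ≠ 2 := by
    rintro rfl
    exact (Nat.not_even_iff_odd.mpr (SEOB.Bodd b hbodd)) (even_iff_two_dvd.mpr hpB)
  have hpb : (p : ℤ) ∣ b := Int.natCast_dvd.mpr hpB
  have hpΔ : (p : ℤ) ∣ Δ := hpb.trans (SEOB.bdvdD f d hd0 Δ hΔ b hb)
  have hpG : (p : ℤ) ∣ (Int.gcd (f : ℤ) Δ : ℤ) :=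
    Int.dvd_coe_gcd (Int.natCast_dvd_natCast.mpr hpf) hpΔ
  exact SEOB.odd_sq_not_dvd d hd Δ hΔ pp hp2
    ((mul_dvd_mul hpb hpG).trans (dvd_of_eq (SEOB.bG f d hd0 Δ hΔ b hb)))

include hf hΔ hd hd0 hb hbodd in
private lemma SEOB.dvd_iff (n : ℕ) :
    Δ ∣ (Nat.lcm n f : ℤ) ↔ b.natAbs ∣ n := by
  constructor
  · intro hdvd
    have key : ∀ p ∈ b.natAbs.primeFactors, p ∣ n := by
      intro p hp
      have pp := Nat.prime_of_mem_primeFactors hp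
      have hpB : p ∣ b.natAbs := Nat.dvd_of_mem_primeFactors hp
      have hpl : p ∣ Nat.lcm n f := by
        have h1 : (p : ℤ) ∣ (Nat.lcm n f : ℤ) :=
          (Int.natCast_dvd.mpr hpB).trans ((SEOB.bdvdD f d hd0 Δ hΔ b hb).trans hdvd)
        exact_mod_cast h1
      rcases pp.dvd_mul.mp (hpl.trans (Nat.lcm_dvd_mul n f)) with h | h
      · exact h
      · exact absurd (Nat.eq_one_of_dvd_coprimes
          ((Nat.Coprime.coprime_dvd_left hpB (SEOB.Bcopf f d hd hd0 Δ hΔ b hb hbodd)))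
          dvd_rfl h) pp.one_lt.ne'
    calc b.natAbs = ∏ p ∈ b.natAbs.primeFactors, p :=
          (Nat.prod_primeFactors_of_squarefree (SEOB.Bsq f d hd hd0 Δ hΔ b hb hbodd)).symm
      _ ∣ n := Finset.prod_primes_dvd n
          (fun p hp => (Nat.prime_of_mem_primeFactors hp).prime)
          (fun p hp => key p hp)
  · intro hBn
    have hbn : b ∣ (n : ℤ) := Int.natAbs_dvd.mp (Int.natCast_dvd_natCast.mpr hBn)
    have hGf : ((Int.gcd (f : ℤ) Δ : ℕ) : ℤ) ∣ (f : ℤ) := Int.gcd_dvd_left _ _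
    have hcop : IsCoprime b ((Int.gcd (f : ℤ) Δ : ℕ) : ℤ) := by
      rw [Int.isCoprime_iff_gcd_eq_one]
      have h1 : Nat.Coprime b.natAbs (Int.gcd (f : ℤ) Δ) :=
        Nat.Coprime.coprime_dvd_right (Int.natCast_dvd_natCast.mp hGf)
          (SEOB.Bcopf f d hd hd0 Δ hΔ b hb hbodd)
      simpa [Int.gcd] using h1
    rw [← SEOB.bG f d hd0 Δ hΔ b hb]
    refine hcop.mul_dvd (hbn.trans ?_) (hGf.trans ?_)
    · exact_mod_cast Nat.dvd_lcm_left n f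
    · exact_mod_cast Nat.dvd_lcm_right n f
end B2

open ArithmeticFunction in
theorem S_eq_of_b_odd (f h : ℕ) (hf : 1 ≤ f) (hh : 1 ≤ h) (hhodd : Odd h)
    (a : ℕ) (ha1 : 1 ≤ a) (haf : a ≤ f) (hco : Nat.Coprime a f)
    (w : ℕ → ℕ)
    (hw : ∀ k, w k = k * Nat.totient (Nat.lcm k f) / (Nat.gcd k h * Nat.totient f))
    (d : ℤ) (hd : Squarefree d) (hd0 : d ≠ 0) (hd1 : d ≠ 1)
    (Δ : ℤ) (hΔ : Δ = if d % 4 = 1 then d else 4 * d)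
    (b : ℤ) (hb : b = Δ / (Int.gcd (f : ℤ) Δ : ℤ)) (hbodd : Odd b)
    (S : ℕ → ℝ)
    (hS : ∀ n, S n = if 1 ≤ n ∧ Δ ∣ (Nat.lcm n f : ℤ) ∧ a % Nat.gcd f n = 1 % Nat.gcd f n
      then (ArithmeticFunction.moebius n : ℝ) / (w n : ℝ) else 0)
    (A : ℝ)
    (hA : A = (∏ p ∈ (Nat.gcd (a - 1) f).primeFactors, (1 - 1 / (w p : ℝ))) *
        ∏' p : Nat.Primes, (if (p : ℕ) ∣ f then 1 else 1 - 1 / (w (p : ℕ) : ℝ))) :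
    ∑' n : ℕ, S n =
      (ArithmeticFunction.moebius b.natAbs : ℝ) * A /
        ∏ p ∈ b.natAbs.primeFactors, ((w p : ℝ) - 1) := by
  -- basic w facts (from aux lemmas)
  have hw1 : w 1 = 1 := SEOB.w1 f h hf hh w hw
  have hwmul : ∀ {m n : ℕ}, Squarefree m → Squarefree n → Nat.Coprime m n →
      w (m * n) = w m * w n := fun hm hn hmn => SEOB.wmul f h hf hh w hw hm hn hmn
  have hwpos : ∀ {k : ℕ}, Squarefree k → 0 < w k := fun hk => SEOB.wpos f h hf hh w hw hk
  have hwp2 : ∀ {p : ℕ}, p.Prime → ¬ p ∣ f → Odd p → 2 ≤ w p :=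
    fun pp hpf hpo => SEOB.wp2 f h hf hh w hw pp hpf hpo
  -- B facts
  set B := b.natAbs with hBdef
  have hBsq : Squarefree B := SEOB.Bsq f d hd hd0 Δ hΔ b hb hbodd
  have hBodd : Odd B := SEOB.Bodd b hbodd
  have hBf : Nat.Coprime B f := SEOB.Bcopf f d hd hd0 Δ hΔ b hb hbodd
  have hdvdiff : ∀ n : ℕ, Δ ∣ (Nat.lcm n f : ℤ) ↔ B ∣ n :=
    SEOB.dvd_iff f hf d hd hd0 Δ hΔ b hb hbodd
  have hB0 : B ≠ 0 :=
    fun h0 => SEOB.b0 f d hd0 Δ hΔ b hb (Int.natAbs_eq_zero.mp h0)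
  have hwB2 : ∀ p ∈ B.primeFactors, 2 ≤ w p := by
    intro p hp
    have pp := Nat.prime_of_mem_primeFactors hp
    have hpB := Nat.dvd_of_mem_primeFactors hp
    have hpodd : Odd p := (Nat.even_or_odd p).resolve_left (fun he =>
      (Nat.not_even_iff_odd.mpr hBodd)
        (even_iff_two_dvd.mpr ((even_iff_two_dvd.mp he).trans hpB)))
    exact hwp2 pp (fun hpf =>
      absurd (Nat.eq_one_of_dvd_coprimes (Nat.Coprime.coprime_dvd_left hpB hBf) dvd_rfl hpf)
        pp.one_lt.ne') hpodd
  -- the multiplicative function g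
  set g : ℕ → ℝ := fun m =>
    if 0 < m ∧ Nat.Coprime B m ∧ Nat.gcd f m ∣ (a - 1)
    then (moebius m : ℝ) / (w m : ℝ) else 0 with hgdef
  have hcond : ∀ k : ℕ, (a % k = 1 % k) ↔ k ∣ (a - 1) := by
    intro k
    rw [← Nat.modEq_iff_dvd' ha1]
    exact ⟨fun hmc => (hmc : Nat.ModEq k a 1).symm, fun hmc => hmc.symm⟩
  have hg0 : g 0 = 0 := by simp [hgdef]
  have hg1 : g 1 = 1 := by simp [hgdef, hw1]
  have hgcdmul : ∀ {m n k : ℕ}, Nat.Coprime m n →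
      Nat.gcd (m * n) k = Nat.gcd m k * Nat.gcd n k := fun hmn => SEOB.gcd_mul hmn
  have hwlow : ∀ {k : ℕ}, Squarefree k → k * Nat.totient k ≤ w k * (h * f) :=
    fun hk => SEOB.wlow f h hf hh w hw hk
  have hvalmul : ∀ {m n : ℕ}, Nat.Coprime m n →
      (moebius (m * n) : ℝ) / (w (m * n) : ℝ)
        = (moebius m : ℝ) / (w m : ℝ) * ((moebius n : ℝ) / (w n : ℝ)) := by
    intro m n hmn
    by_cases hsm : Squarefree m
    · by_cases hsn : Squarefree n
      · rw [isMultiplicative_moebius.map_mul_of_coprime hmn, hwmul hsm hsn hmn]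
        push_cast
        rw [div_mul_div_comm]
      · rw [moebius_eq_zero_of_not_squarefree hsn, moebius_eq_zero_of_not_squarefree
          (fun hsq => hsn (hsq.squarefree_of_dvd (dvd_mul_left n m)))]
        simp
    · rw [moebius_eq_zero_of_not_squarefree hsm, moebius_eq_zero_of_not_squarefree
        (fun hsq => hsm (hsq.squarefree_of_dvd (dvd_mul_right m n)))]
      simp
  have hgmul : ∀ {m n : ℕ}, Nat.Coprime m n → g (m * n) = g m * g n := by
    intro m n hmn
    rcases Nat.eq_zero_or_pos m with rfl | hm
    · have hn1 : n = 1 := by simpa using hmn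
      subst hn1
      simp [hg0, hg1]
    rcases Nat.eq_zero_or_pos n with rfl | hn
    · have hm1 : m = 1 := by simpa using hmn
      subst hm1
      simp [hg0, hg1]
    have hgcdf : Nat.gcd f (m * n) = Nat.gcd f m * Nat.gcd f n := by
      rw [Nat.gcd_comm f (m * n), hgcdmul hmn, Nat.gcd_comm m f, Nat.gcd_comm n f]
    have hdviff : Nat.gcd f (m * n) ∣ (a - 1) ↔
        (Nat.gcd f m ∣ (a - 1) ∧ Nat.gcd f n ∣ (a - 1)) := by
      rw [hgcdf]
      constructor
      · intro hdv
        exact ⟨(dvd_mul_right _ _).trans hdv, (dvd_mul_left _ _).trans hdv⟩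
      · rintro ⟨h1, h2⟩
        exact Nat.Coprime.mul_dvd_of_dvd_of_dvd
          (Nat.Coprime.coprime_dvd_left (Nat.gcd_dvd_right f m)
            (Nat.Coprime.coprime_dvd_right (Nat.gcd_dvd_right f n) hmn)) h1 h2
    by_cases hCm : (0 < m ∧ Nat.Coprime B m ∧ Nat.gcd f m ∣ (a - 1))
    · by_cases hCn : (0 < n ∧ Nat.Coprime B n ∧ Nat.gcd f n ∣ (a - 1))
      · rw [hgdef]
        simp only
        rw [if_pos (⟨Nat.mul_pos hm hn, Nat.coprime_mul_iff_right.mpr ⟨hCm.2.1, hCn.2.1⟩,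
            hdviff.mpr ⟨hCm.2.2, hCn.2.2⟩⟩ : (0 < m * n ∧ Nat.Coprime B (m * n)
              ∧ Nat.gcd f (m * n) ∣ (a - 1))),
          if_pos hCm, if_pos hCn]
        exact hvalmul hmn
      · rw [hgdef]
        simp only
        rw [if_neg (fun hc : (0 < m * n ∧ Nat.Coprime B (m * n) ∧ Nat.gcd f (m * n) ∣ (a - 1)) =>
            hCn ⟨hn, (Nat.coprime_mul_iff_right.mp hc.2.1).2, (hdviff.mp hc.2.2).2⟩),
          if_neg hCn, mul_zero]
    · rw [hgdef]
      simp only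
      rw [if_neg (fun hc : (0 < m * n ∧ Nat.Coprime B (m * n) ∧ Nat.gcd f (m * n) ∣ (a - 1)) =>
          hCm ⟨hm, (Nat.coprime_mul_iff_right.mp hc.2.1).1, (hdviff.mp hc.2.2).1⟩),
        if_neg hCm, zero_mul]
  have hgsum : Summable (fun n => ‖g n‖) := by
    have hmaj : Summable (fun n : ℕ => (2 * h * f : ℝ) * (1 / (n : ℝ) ^ ((3 : ℝ) / 2))) :=
      (Real.summable_one_div_nat_rpow.mpr (by norm_num)).mul_left _
    refine Summable.of_nonneg_of_le (fun n => norm_nonneg _) (fun n => ?_) hmaj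
    have hrpos : ∀ k : ℕ, (0 : ℝ) ≤ 1 / (k : ℝ) ^ ((3 : ℝ) / 2) := fun k => by positivity
    rcases Nat.eq_zero_or_pos n with rfl | hn
    · rw [hg0, norm_zero]
      positivity
    by_cases hsn : Squarefree n
    · have hW0 : (0 : ℝ) < (w n : ℝ) := by exact_mod_cast hwpos hsn
      have hx0 : (0 : ℝ) < (n : ℝ) := by exact_mod_cast hn
      have hnat : n ^ 3 ≤ (2 * h * f * w n) ^ 2 := by
        have h1 := hwlow hsn
        have h2 := SEOB.totient_sq n hsn
        calc n ^ 3 = n ^ 2 * n := by ring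
          _ ≤ n ^ 2 * (2 * n.totient ^ 2) := Nat.mul_le_mul_left _ h2
          _ = 2 * (n * n.totient) ^ 2 := by ring
          _ ≤ 2 * (w n * (h * f)) ^ 2 := Nat.mul_le_mul_left _ (Nat.pow_le_pow_left h1 2)
          _ ≤ 4 * (w n * (h * f)) ^ 2 := Nat.mul_le_mul_right _ (by norm_num)
          _ = (2 * h * f * w n) ^ 2 := by ring
      have hreal : ((n : ℝ)) ^ (3 : ℕ) ≤ ((2 * h * f : ℝ) * (w n : ℝ)) ^ (2 : ℕ) := by
        exact_mod_cast hnat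
      have hxx : (0 : ℝ) < (n : ℝ) ^ ((3 : ℝ) / 2) := Real.rpow_pos_of_pos hx0 _
      have hx2 : ((n : ℝ) ^ ((3 : ℝ) / 2)) ^ (2 : ℕ) = (n : ℝ) ^ (3 : ℕ) := by
        rw [← Real.rpow_natCast ((n : ℝ) ^ ((3 : ℝ) / 2)) 2, ← Real.rpow_mul hx0.le,
          ← Real.rpow_natCast (n : ℝ) 3]
        norm_num
      have hxle : (n : ℝ) ^ ((3 : ℝ) / 2) ≤ (2 * h * f : ℝ) * (w n : ℝ) := by
        have h1 : ((n : ℝ) ^ ((3 : ℝ) / 2)) ^ (2 : ℕ) ≤ ((2 * h * f : ℝ) * (w n : ℝ)) ^ (2 : ℕ) := by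
          rw [hx2]; exact hreal
        have h2 := Real.sqrt_le_sqrt h1
        rwa [Real.sqrt_sq hxx.le, Real.sqrt_sq (by positivity)] at h2
      have hgn : ‖g n‖ ≤ 1 / (w n : ℝ) := by
        have hμ : |((moebius n : ℤ) : ℝ)| = 1 := by
          rw [moebius_apply_of_squarefree hsn]
          push_cast
          simp [abs_pow]
        rw [hgdef]
        simp only
        split_ifs with hc
        · rw [Real.norm_eq_abs, abs_div, hμ, abs_of_pos hW0]
        · rw [norm_zero]
          positivity
      refine hgn.trans ?_
      rw [mul_one_div, div_le_div_iff₀ hW0 hxx, one_mul]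
      exact hxle
    · have hg0' : ‖g n‖ = 0 := by
        rw [hgdef]
        simp only
        split_ifs with hc
        · rw [moebius_eq_zero_of_not_squarefree hsn]
          simp
        · simp
      rw [hg0']
      positivity
  -- reindexing the S-sum
  have hSg : ∀ m : ℕ, S (B * m) = (moebius B : ℝ) / (w B : ℝ) * g m := by
    intro m
    rcases Nat.eq_zero_or_pos m with rfl | hm
    · rw [mul_zero, hS 0, hg0, mul_zero, if_neg (by omega)]
    · have hBm1 : 1 ≤ B * m := Nat.mul_pos (Nat.pos_of_ne_zero hB0) hm
      rw [hS (B * m)]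
      by_cases hcop : Nat.Coprime B m
      · have hgcdeq : Nat.gcd f (B * m) = Nat.gcd f m := by
          rw [Nat.gcd_comm f (B * m), Nat.Coprime.gcd_mul_left_cancel m hBf, Nat.gcd_comm]
        by_cases hdv : Nat.gcd f m ∣ (a - 1)
        · rw [if_pos ⟨hBm1, (hdvdiff _).mpr ⟨m, rfl⟩, by rw [hgcdeq]; exact (hcond _).mpr hdv⟩,
            hgdef]
          simp only
          rw [if_pos ⟨hm, hcop, hdv⟩]
          exact hvalmul hcop
        · rw [if_neg (fun hc => hdv ((hcond _).mp (hgcdeq ▸ hc.2.2))), hgdef]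
          simp only
          rw [if_neg (fun hc : (0 < m ∧ Nat.Coprime B m ∧ Nat.gcd f m ∣ (a - 1)) => hdv hc.2.2),
            mul_zero]
      · have hnsq : ¬ Squarefree (B * m) := by
          intro hsq
          obtain ⟨p, pp, pd⟩ := Nat.exists_prime_and_dvd
            (fun h1 => hcop (Nat.coprime_iff_gcd_eq_one.mpr h1))
          have hpp : p * p ∣ B * m :=
            mul_dvd_mul (pd.trans (Nat.gcd_dvd_left _ _)) (pd.trans (Nat.gcd_dvd_right _ _))
          exact pp.one_lt.ne' (Nat.isUnit_iff.mp (hsq p hpp))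
        have hzero : (moebius (B * m) : ℝ) = 0 := by
          rw [moebius_eq_zero_of_not_squarefree hnsq]
          simp
        rw [hgdef]
        simp only
        rw [if_neg (fun hc : (0 < m ∧ Nat.Coprime B m ∧ Nat.gcd f m ∣ (a - 1)) => hcop hc.2.1),
          mul_zero]
        split_ifs with hc
        · rw [hzero, zero_div]
        · rfl
  have hstep1 : ∑' n : ℕ, S n = (moebius B : ℝ) / (w B : ℝ) * ∑' m : ℕ, g m := by
    rw [← tsum_mul_left]
    rw [← Function.Injective.tsum_eq (g := fun m : ℕ => B * m)
      (fun x y hxy => by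
        simpa using Nat.eq_of_mul_eq_mul_left (Nat.pos_of_ne_zero hB0) hxy)
      (fun n hn => by
        rw [Function.mem_support, hS n] at hn
        split_ifs at hn with hc
        · exact ⟨n / B, Nat.mul_div_cancel' ((hdvdiff n).mp hc.2.1)⟩
        · exact absurd rfl hn)]
    exact tsum_congr hSg
  -- Euler product
  set T : ℝ := ∑' m : ℕ, g m with hT
  have hEP : HasProd (fun p : Nat.Primes => 1 + g p) T := by
    have h0 := EulerProduct.eulerProduct_hasProd hg1 hgmul hgsum hg0
    have hloc : ∀ p : Nat.Primes, (∑' e : ℕ, g ((p : ℕ) ^ e)) = 1 + g p := by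
      intro p
      rw [tsum_eq_sum (s := {0, 1}) (fun e he => by
        have he2 : 2 ≤ e := by
          simp only [Finset.mem_insert, Finset.mem_singleton] at he; omega
        have hns : ¬ Squarefree ((p : ℕ) ^ e) := by
          intro hsq
          have := hsq (p : ℕ) (by
            calc ((p:ℕ) * p) = (p:ℕ)^2 := (sq (p:ℕ)).symm
              _ ∣ (p:ℕ)^e := pow_dvd_pow _ he2)
          exact (p.2.one_lt).ne' (Nat.isUnit_iff.mp this)
        simp [hgdef, moebius_eq_zero_of_not_squarefree hns])]
      rw [Finset.sum_pair (by norm_num)]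
      simp [hg1, pow_one]
    exact (funext hloc : _) ▸ h0
  -- prime values of g
  have hgp : ∀ p : Nat.Primes, g (p : ℕ) =
      if (p : ℕ) ∣ B then 0
      else if ((p : ℕ) ∣ f ∧ ¬ (p : ℕ) ∣ (a - 1)) then 0
      else -(1 / (w (p : ℕ) : ℝ)) := by
    intro p
    have pp := p.2
    by_cases hpB : (p : ℕ) ∣ B
    · rw [if_pos hpB, hgdef]
      refine if_neg (fun hcnd => ?_)
      exact pp.one_lt.ne' (Nat.eq_one_of_dvd_coprimes hcnd.2.1 hpB dvd_rfl)
    · rw [if_neg hpB]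
      have hcop : Nat.Coprime B (p : ℕ) :=
        (Nat.coprime_comm.mp ((Nat.Prime.coprime_iff_not_dvd pp).mpr hpB))
      by_cases hpf : (p : ℕ) ∣ f
      · have hgcd : Nat.gcd f (p : ℕ) = (p : ℕ) := Nat.gcd_eq_right hpf
        by_cases hpa : (p : ℕ) ∣ (a - 1)
        · rw [if_neg (by tauto), hgdef]
          simp only [hgcd]
          rw [if_pos ⟨pp.pos, hcop, hpa⟩, moebius_apply_prime pp]
          push_cast
          ring
        · rw [if_pos ⟨hpf, hpa⟩, hgdef]
          simp only [hgcd]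
          exact if_neg (fun hcnd => hpa hcnd.2.2)
      · have hgcd : Nat.gcd f (p : ℕ) = 1 :=
          Nat.Coprime.gcd_eq_one (Nat.coprime_comm.mp ((Nat.Prime.coprime_iff_not_dvd pp).mpr hpf))
        rw [if_neg (by tauto), hgdef]
        simp only [hgcd]
        rw [if_pos ⟨pp.pos, hcop, one_dvd _⟩, moebius_apply_prime pp]
        push_cast
        ring
  -- the three prime-indexed functions
  set Q : Nat.Primes → ℝ :=
    fun p => if (p : ℕ) ∣ f then 1 else 1 - 1 / (w (p : ℕ) : ℝ) with hQdef
  set βN : ℕ → ℝ := fun q => if q ∈ B.primeFactors then 1 - 1 / (w q : ℝ) else 1 with hbNdef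
  set γN : ℕ → ℝ :=
    fun q => if q ∈ (Nat.gcd (a - 1) f).primeFactors then 1 - 1 / (w q : ℝ) else 1 with hcNdef
  have hinj : Function.Injective (fun p : Nat.Primes => (p : ℕ)) := fun p q hpq => Subtype.ext hpq
  have hrange : ∀ x : ℕ, x.Prime → x ∈ Set.range (fun p : Nat.Primes => (p : ℕ)) :=
    fun x hx => ⟨⟨x, hx⟩, rfl⟩
  have hβ : HasProd (fun q : Nat.Primes => βN (q : ℕ))
      (∏ p ∈ B.primeFactors, (1 - 1 / (w p : ℝ))) := by
    rw [show (fun q : Nat.Primes => βN (q : ℕ)) = βN ∘ (fun p : Nat.Primes => (p : ℕ)) from rfl,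
      Function.Injective.hasProd_iff hinj (fun x hx => by
        rw [hbNdef]
        exact if_neg (fun hmem => hx (hrange x (Nat.prime_of_mem_primeFactors hmem))))]
    have h5 := hasProd_prod_of_ne_finset_one (s := B.primeFactors) (f := βN) (L := SummationFilter.unconditional ℕ)
      (fun q hq => if_neg hq)
    rwa [Finset.prod_congr rfl (fun q (hq : q ∈ B.primeFactors) => (if_pos hq :
      βN q = 1 - 1 / (w q : ℝ)))] at h5
  have hpoint : ∀ q : Nat.Primes, (1 + g (q : ℕ)) * βN (q : ℕ) = γN (q : ℕ) * Q q := by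
    intro q
    have pp := q.2
    have hγmem : (q : ℕ) ∈ (Nat.gcd (a - 1) f).primeFactors ↔
        ((q : ℕ) ∣ (a - 1) ∧ (q : ℕ) ∣ f) := by
      rw [Nat.mem_primeFactors, Nat.dvd_gcd_iff]
      constructor
      · rintro ⟨-, ⟨h1, h2⟩, -⟩; exact ⟨h1, h2⟩
      · rintro ⟨h1, h2⟩
        exact ⟨pp, ⟨h1, h2⟩, fun h0 => by
          have := (Nat.gcd_eq_zero_iff.mp h0).2; omega⟩
    have hβmem : (q : ℕ) ∈ B.primeFactors ↔ (q : ℕ) ∣ B := by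
      rw [Nat.mem_primeFactors]
      exact ⟨fun hx => hx.2.1, fun hx => ⟨pp, hx, hB0⟩⟩
    rw [hgp q, hbNdef, hcNdef, hQdef]
    by_cases hqB : (q : ℕ) ∣ B
    · have hqf : ¬ (q : ℕ) ∣ f := fun hqf =>
        pp.one_lt.ne' (Nat.eq_one_of_dvd_coprimes (Nat.Coprime.coprime_dvd_left hqB hBf) dvd_rfl hqf)
      simp only [if_pos hqB, if_pos (hβmem.mpr hqB), if_neg hqf,
        if_neg (fun hm : (q:ℕ) ∈ (Nat.gcd (a-1) f).primeFactors => hqf (hγmem.mp hm).2)]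
      ring
    · by_cases hqf : (q : ℕ) ∣ f
      · by_cases hqa : (q : ℕ) ∣ (a - 1)
        · simp only [if_neg hqB, if_neg (fun hx : ((q:ℕ) ∣ f ∧ ¬ (q:ℕ) ∣ (a-1)) => hx.2 hqa),
            if_neg (fun hm : (q:ℕ) ∈ B.primeFactors => hqB (hβmem.mp hm)),
            if_pos (hγmem.mpr ⟨hqa, hqf⟩), if_pos hqf]
          ring
        · simp only [if_neg hqB, if_pos (⟨hqf, hqa⟩ : ((q:ℕ) ∣ f ∧ ¬ (q:ℕ) ∣ (a-1))),
            if_neg (fun hm : (q:ℕ) ∈ B.primeFactors => hqB (hβmem.mp hm)),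
            if_neg (fun hm : (q:ℕ) ∈ (Nat.gcd (a-1) f).primeFactors => hqa (hγmem.mp hm).1),
            if_pos hqf]
          ring
      · simp only [if_neg hqB, if_neg (fun hx : ((q:ℕ) ∣ f ∧ ¬ (q:ℕ) ∣ (a-1)) => hqf hx.1),
          if_neg (fun hm : (q:ℕ) ∈ B.primeFactors => hqB (hβmem.mp hm)),
          if_neg (fun hm : (q:ℕ) ∈ (Nat.gcd (a-1) f).primeFactors => hqf (hγmem.mp hm).2),
          if_neg hqf]
        ring
  set Pβ : ℝ := ∏ p ∈ B.primeFactors, (1 - 1 / (w p : ℝ)) with hPβ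
  have h1 : HasProd (fun q : Nat.Primes => γN (q : ℕ) * Q q) (T * Pβ) := by
    have := hEP.mul hβ
    exact (funext hpoint : _) ▸ this
  have hAeq : A = T * Pβ := by
    by_cases hcase : ∀ p ∈ (Nat.gcd (a - 1) f).primeFactors, (1 : ℝ) - 1 / (w p : ℝ) ≠ 0
    · have hγinv : HasProd (fun q : Nat.Primes => (γN (q : ℕ))⁻¹)
          (∏ p ∈ (Nat.gcd (a - 1) f).primeFactors, (1 - 1 / (w p : ℝ))⁻¹) := by
        rw [show (fun q : Nat.Primes => (γN (q : ℕ))⁻¹)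
            = (fun x => (γN x)⁻¹) ∘ (fun p : Nat.Primes => (p : ℕ)) from rfl,
          Function.Injective.hasProd_iff hinj (fun x hx => by
            show (γN x)⁻¹ = 1
            rw [show γN x = 1 from
              if_neg (fun hmem => hx (hrange x (Nat.prime_of_mem_primeFactors hmem))), inv_one])]
        have h5 := hasProd_prod_of_ne_finset_one
          (s := (Nat.gcd (a - 1) f).primeFactors) (f := fun x => (γN x)⁻¹) (L := SummationFilter.unconditional ℕ)
          (fun q hq => by
            show (γN q)⁻¹ = 1
            rw [show γN q = 1 from if_neg hq, inv_one])
        rwa [Finset.prod_congr rfl (fun q (hq : q ∈ (Nat.gcd (a-1) f).primeFactors) => by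
          show (γN q)⁻¹ = (1 - 1 / (w q : ℝ))⁻¹
          rw [show γN q = 1 - 1 / (w q : ℝ) from if_pos hq])] at h5
      have h2 := hγinv.mul h1
      have hQfun : (fun q : Nat.Primes => (γN (q : ℕ))⁻¹ * (γN (q : ℕ) * Q q)) = Q := by
        funext q
        by_cases hq : (q : ℕ) ∈ (Nat.gcd (a - 1) f).primeFactors
        · rw [show γN (q : ℕ) = 1 - 1 / (w (q : ℕ) : ℝ) from if_pos hq,
            inv_mul_cancel_left₀ (hcase _ hq)]
        · rw [show γN (q : ℕ) = 1 from if_neg hq, inv_one, one_mul, one_mul]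
      rw [hQfun] at h2
      have htp := h2.tprod_eq
      have hPγ0 : (∏ p ∈ (Nat.gcd (a - 1) f).primeFactors, (1 - 1 / (w p : ℝ))) ≠ 0 :=
        Finset.prod_ne_zero_iff.mpr hcase
      rw [hA, htp, Finset.prod_inv_distrib]
      field_simp
    · push_neg at hcase
      obtain ⟨p0, hp0mem, hp0⟩ := hcase
      have pp0 := Nat.prime_of_mem_primeFactors hp0mem
      -- T = 0
      have hq0 : (1 : ℝ) + g p0 = 0 := by
        have hmem := Nat.mem_primeFactors.mp hp0mem
        have hdv := Nat.dvd_gcd_iff.mp hmem.2.1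
        have := hgp ⟨p0, pp0⟩
        simp only at this
        rw [this, if_neg (fun hpB =>
            pp0.one_lt.ne' (Nat.eq_one_of_dvd_coprimes (Nat.Coprime.coprime_dvd_left hpB hBf)
              dvd_rfl hdv.2)),
          if_neg (fun hx : (p0 ∣ f ∧ ¬ p0 ∣ (a-1)) => hx.2 hdv.1)]
        linarith [hp0]
      have hT0 : T = 0 := by
        have h7 : Filter.Tendsto (fun s : Finset Nat.Primes => ∏ q ∈ s, (1 + g (q : ℕ)))
            Filter.atTop (nhds T) := hEP
        have h6 : (fun s : Finset Nat.Primes => ∏ q ∈ s, (1 + g (q : ℕ)))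
            =ᶠ[Filter.atTop] (fun _ => (0 : ℝ)) :=
          Filter.eventually_atTop.mpr ⟨{⟨p0, pp0⟩}, fun s hs =>
            Finset.prod_eq_zero (hs (Finset.mem_singleton_self _)) hq0⟩
        exact tendsto_nhds_unique (h7.congr' h6) tendsto_const_nhds
      have hPγ0 : (∏ p ∈ (Nat.gcd (a - 1) f).primeFactors, (1 - 1 / (w p : ℝ))) = 0 :=
        Finset.prod_eq_zero hp0mem hp0
      rw [hA, hPγ0, hT0, zero_mul, zero_mul]
  -- final algebra
  have hwprodN : w B = ∏ p ∈ B.primeFactors, w p :=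
    SEOB.wprod w hw1 hwmul B hBsq
  have hwBprod : (w B : ℝ) = ∏ p ∈ B.primeFactors, (w p : ℝ) := by
    rw [hwprodN]
    push_cast
    ring
  have hprodm1 : ∏ p ∈ B.primeFactors, ((w p : ℝ) - 1) = (w B : ℝ) * Pβ := by
    rw [hwBprod, hPβ, ← Finset.prod_mul_distrib]
    refine Finset.prod_congr rfl (fun p hp => ?_)
    have h2 : (2 : ℝ) ≤ (w p : ℝ) := by exact_mod_cast hwB2 p hp
    field_simp
  have hPβne : Pβ ≠ 0 := by
    rw [hPβ]
    refine Finset.prod_ne_zero_iff.mpr (fun p hp => ?_)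
    have h2 : (2 : ℝ) ≤ (w p : ℝ) := by exact_mod_cast hwB2 p hp
    have : 1 / (w p : ℝ) < 1 := by
      rw [div_lt_one (by linarith)]
      linarith
    linarith
  have hwBne : (w B : ℝ) ≠ 0 := by
    have h9 := hwpos hBsq
    exact_mod_cast h9.ne' 
  rw [hstep1, hAeq, hprodm1]
  field_simp
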